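/- Let f ∈ L¹(ℝ) with f ≥ 0 almost everywhere and ∫_ℝ f(x)dx = 1, and let m be a continuous linear functional on L^∞(ℝ) satisfying m(f⋆φ) = m(φ) for every φ ∈ L^∞(ℝ). Then m admits a Jordan decomposition within the f-invariant functionals: there exist continuous linear functionals m₊ and m₋ on L^∞(ℝ), both positive (m_±(φ) ≥ 0 whenever φ ≥ 0 a.e.) and both satisfying m_±(f⋆φ) = m_±(φ) for all φ ∈ L^∞(ℝ), such that m = m₊ − m₋ and ‖m‖ = ‖m₊‖ + ‖m₋‖. -/

import Mathlib

open MeasureTheory Filter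

/-- The convolution `(f⋆φ)(x) = ∫ φ(x-t) f(t) dt`. -/
noncomputable def conv (f φ : ℝ → ℝ) (x : ℝ) : ℝ := ∫ t : ℝ, φ (x - t) * f t

namespace JordanAux

noncomputable section

local notation "E" => Lp ℝ ⊤ (volume : Measure ℝ)

/-- a.e. bound for an `L^∞` function. -/
lemma ae_bound (φ : E) : ∀ᵐ x ∂(volume : Measure ℝ), ‖φ x‖ ≤ ‖φ‖ := by
  have h := ae_le_eLpNormEssSup (f := ⇑φ) (μ := (volume : Measure ℝ))
  have hne : eLpNormEssSup (⇑φ) (volume : Measure ℝ) ≠ ⊤ := by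
    have := Lp.eLpNorm_ne_top φ
    rwa [eLpNorm_exponent_top] at this
  filter_upwards [h] with x hx
  have h1 : ‖φ‖ = (eLpNormEssSup (⇑φ) (volume : Measure ℝ)).toReal := by
    rw [Lp.norm_def, eLpNorm_exponent_top]
  rw [h1]
  have := ENNReal.toReal_mono hne hx
  simpa using this

section posP

variable (m : E →L[ℝ] ℝ)

/-- The candidate positive part, defined on nonnegative elements via a supremum. -/
def posP (φ : E) : ℝ := sSup ((fun ψ => m ψ) '' {ψ : E | 0 ≤ ψ ∧ ψ ≤ φ})

lemma norm_le_of_nonneg_le {ψ φ : E} (h0 : 0 ≤ ψ) (h1 : ψ ≤ φ) : ‖ψ‖ ≤ ‖φ‖ := by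
  refine norm_le_norm_of_abs_le_abs ?_
  calc |ψ| = ψ := abs_of_nonneg h0
  _ ≤ φ := h1
  _ ≤ |φ| := le_abs_self φ


lemma smul_nonneg_E {c : ℝ} (hc : 0 ≤ c) {φ : E} (hφ : 0 ≤ φ) : 0 ≤ c • φ := by
  rw [← Lp.coeFn_nonneg] at hφ ⊢
  filter_upwards [hφ, Lp.coeFn_smul c φ] with x h1 h2
  rw [Pi.zero_apply] at h1 ⊢
  rw [h2, Pi.smul_apply, smul_eq_mul]
  exact mul_nonneg hc h1

lemma smul_le_smul_E {c : ℝ} (hc : 0 ≤ c) {φ η : E} (h : φ ≤ η) : c • φ ≤ c • η := by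
  rw [← sub_nonneg, ← smul_sub]
  exact smul_nonneg_E hc (sub_nonneg.2 h)

lemma posP_bddAbove (φ : E) : BddAbove ((fun ψ => m ψ) '' {ψ : E | 0 ≤ ψ ∧ ψ ≤ φ}) := by
  refine ⟨‖m‖ * ‖φ‖, ?_⟩
  rintro y ⟨ψ, ⟨h0, h1⟩, rfl⟩
  calc m ψ ≤ |m ψ| := le_abs_self _
  _ ≤ ‖m‖ * ‖ψ‖ := m.le_opNorm ψ
  _ ≤ ‖m‖ * ‖φ‖ := mul_le_mul_of_nonneg_left (norm_le_of_nonneg_le h0 h1) (norm_nonneg m)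

lemma le_posP {ψ φ : E} (h0 : 0 ≤ ψ) (h1 : ψ ≤ φ) : m ψ ≤ posP m φ :=
  le_csSup (posP_bddAbove m φ) ⟨ψ, ⟨h0, h1⟩, rfl⟩

lemma posP_le {φ : E} (hφ : 0 ≤ φ) {C : ℝ}
    (h : ∀ ψ : E, 0 ≤ ψ → ψ ≤ φ → m ψ ≤ C) : posP m φ ≤ C := by
  refine csSup_le ⟨m 0, ⟨0, ⟨le_rfl, hφ⟩, rfl⟩⟩ ?_
  rintro y ⟨ψ, ⟨h0, h1⟩, rfl⟩
  exact h ψ h0 h1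

lemma posP_nonneg {φ : E} (hφ : 0 ≤ φ) : 0 ≤ posP m φ := by
  have := le_posP m (le_refl (0 : E)) hφ
  simpa using this

lemma posP_le_norm {φ : E} (hφ : 0 ≤ φ) : posP m φ ≤ ‖m‖ * ‖φ‖ := by
  refine posP_le m hφ ?_
  rintro ψ h0 h1
  calc m ψ ≤ |m ψ| := le_abs_self _
  _ ≤ ‖m‖ * ‖ψ‖ := m.le_opNorm ψ
  _ ≤ ‖m‖ * ‖φ‖ := mul_le_mul_of_nonneg_left (norm_le_of_nonneg_le h0 h1) (norm_nonneg m)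

lemma posP_zero : posP m 0 = 0 := by
  apply le_antisymm
  · refine posP_le m le_rfl ?_
    intro ψ h0 h1
    have : ψ = 0 := le_antisymm h1 h0
    simp [this]
  · exact posP_nonneg m le_rfl

lemma posP_add {φ η : E} (hφ : 0 ≤ φ) (hη : 0 ≤ η) :
    posP m (φ + η) = posP m φ + posP m η := by
  have hφη : 0 ≤ φ + η := add_nonneg hφ hη
  apply le_antisymm
  · refine posP_le m hφη ?_
    intro ψ h0 h1
    have h10 : 0 ≤ ψ ⊓ φ := le_inf h0 hφ
    have h11 : ψ ⊓ φ ≤ φ := inf_le_right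
    have h20 : 0 ≤ ψ - ψ ⊓ φ := sub_nonneg.2 inf_le_left
    have h21 : ψ - ψ ⊓ φ ≤ η := by
      rw [sub_inf]
      refine sup_le (by simpa using hη) ?_
      rw [sub_le_iff_le_add]
      calc ψ ≤ φ + η := h1
      _ = η + φ := add_comm _ _
    have hsplit : ψ = ψ ⊓ φ + (ψ - ψ ⊓ φ) := by abel
    calc m ψ = m (ψ ⊓ φ) + m (ψ - ψ ⊓ φ) := by rw [← map_add]; rw [← hsplit]
    _ ≤ posP m φ + posP m η := add_le_add (le_posP m h10 h11) (le_posP m h20 h21)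
  · rw [← sub_nonneg]
    have key : posP m φ ≤ posP m (φ + η) - posP m η := by
      refine posP_le m hφ ?_
      intro ψ₁ h10 h11
      rw [le_sub_iff_add_le, add_comm, ← le_sub_iff_add_le]
      refine posP_le m hη ?_
      intro ψ₂ h20 h21
      have := le_posP m (add_nonneg h10 h20) (add_le_add h11 h21)
      rw [map_add] at this
      linarith
    linarith

lemma posP_smul {c : ℝ} (hc : 0 ≤ c) {φ : E} (hφ : 0 ≤ φ) :
    posP m (c • φ) = c * posP m φ := by
  rcases eq_or_lt_of_le hc with rfl | hc
  · simp [posP_zero m]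
  · have hcφ : 0 ≤ c • φ := smul_nonneg_E hc.le hφ
    apply le_antisymm
    · refine posP_le m hcφ ?_
      intro ψ h0 h1
      have hinv : c⁻¹ • ψ ≤ φ := by
        have := smul_le_smul_E (inv_nonneg.2 hc.le) h1
        rwa [smul_smul, inv_mul_cancel₀ hc.ne', one_smul] at this
      have hinv0 : 0 ≤ c⁻¹ • ψ := smul_nonneg_E (inv_nonneg.2 hc.le) h0
      have : m ψ = c * m (c⁻¹ • ψ) := by
        rw [m.map_smul, smul_eq_mul, ← mul_assoc, mul_inv_cancel₀ hc.ne', one_mul]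
      rw [this]
      exact mul_le_mul_of_nonneg_left (le_posP m hinv0 hinv) hc.le
    · rw [mul_comm, ← le_div_iff₀ hc]
      refine posP_le m hφ ?_
      intro ψ h0 h1
      rw [le_div_iff₀ hc, mul_comm]
      have h0' : 0 ≤ c • ψ := smul_nonneg_E hc.le h0
      have h1' : c • ψ ≤ c • φ := smul_le_smul_E hc.le h1
      have := le_posP m h0' h1'
      rw [m.map_smul, smul_eq_mul] at this
      exact this

/-- The extension of `posP` to all of `L^∞`. -/
def preJ (φ : E) : ℝ := posP m (φ⁺) - posP m (φ⁻)

lemma preJ_eq {φ a b : E} (ha : 0 ≤ a) (hb : 0 ≤ b) (hab : φ = a - b) :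
    preJ m φ = posP m a - posP m b := by
  have hkey : φ⁺ + b = φ⁻ + a := by
    have h0 : φ⁺ - φ⁻ = a - b := by rw [posPart_sub_negPart]; exact hab
    have h1 := sub_eq_sub_iff_add_eq_add.mp h0
    exact h1.trans (add_comm a (φ⁻))
  have h1 : posP m (φ⁺ + b) = posP m (φ⁺) + posP m b :=
    posP_add m (posPart_nonneg φ) hb
  have h2 : posP m (φ⁻ + a) = posP m (φ⁻) + posP m a :=
    posP_add m (negPart_nonneg φ) ha
  rw [hkey, h2] at h1
  unfold preJ
  linarith

lemma preJ_add (φ η : E) : preJ m (φ + η) = preJ m φ + preJ m η := by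
  have h : φ + η = (φ⁺ + η⁺) - (φ⁻ + η⁻) := by
    have hr : (φ⁺ + η⁺) - (φ⁻ + η⁻) = (φ⁺ - φ⁻) + (η⁺ - η⁻) := by abel
    rw [hr, posPart_sub_negPart, posPart_sub_negPart]
  rw [preJ_eq m (add_nonneg (posPart_nonneg φ) (posPart_nonneg η))
      (add_nonneg (negPart_nonneg φ) (negPart_nonneg η)) h,
    posP_add m (posPart_nonneg φ) (posPart_nonneg η),
    posP_add m (negPart_nonneg φ) (negPart_nonneg η)]
  unfold preJ
  ring

lemma preJ_smul (c : ℝ) (φ : E) : preJ m (c • φ) = c * preJ m φ := by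
  rcases le_or_gt 0 c with hc | hc
  · have h : c • φ = c • (φ⁺) - c • (φ⁻) := by
      rw [← smul_sub, posPart_sub_negPart]
    rw [preJ_eq m (smul_nonneg_E hc (posPart_nonneg φ)) (smul_nonneg_E hc (negPart_nonneg φ)) h,
      posP_smul m hc (posPart_nonneg φ), posP_smul m hc (negPart_nonneg φ)]
    unfold preJ; ring
  · have hc' : 0 ≤ -c := by linarith
    have h : c • φ = (-c) • (φ⁻) - (-c) • (φ⁺) := by
      rw [← smul_sub, ← neg_sub, smul_neg, ← neg_smul, neg_neg, posPart_sub_negPart]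
    rw [preJ_eq m (smul_nonneg_E hc' (negPart_nonneg φ)) (smul_nonneg_E hc' (posPart_nonneg φ)) h,
      posP_smul m hc' (negPart_nonneg φ), posP_smul m hc' (posPart_nonneg φ)]
    unfold preJ; ring

lemma norm_posPart_le (φ : E) : ‖φ⁺‖ ≤ ‖φ‖ := by
  refine norm_le_norm_of_abs_le_abs ?_
  rw [abs_of_nonneg (posPart_nonneg φ)]
  exact sup_le (le_abs_self φ) (abs_nonneg φ)

lemma norm_negPart_le (φ : E) : ‖φ⁻‖ ≤ ‖φ‖ := by
  refine norm_le_norm_of_abs_le_abs ?_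
  rw [abs_of_nonneg (negPart_nonneg φ)]
  exact sup_le (neg_le_abs φ) (abs_nonneg φ)

lemma preJ_bound (φ : E) : ‖preJ m φ‖ ≤ 2 * ‖m‖ * ‖φ‖ := by
  have h1 : 0 ≤ posP m (φ⁺) := posP_nonneg m (posPart_nonneg φ)
  have h2 : 0 ≤ posP m (φ⁻) := posP_nonneg m (negPart_nonneg φ)
  have h3 : posP m (φ⁺) ≤ ‖m‖ * ‖φ‖ :=
    (posP_le_norm m (posPart_nonneg φ)).trans
      (mul_le_mul_of_nonneg_left (norm_posPart_le φ) (norm_nonneg m))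
  have h4 : posP m (φ⁻) ≤ ‖m‖ * ‖φ‖ :=
    (posP_le_norm m (negPart_nonneg φ)).trans
      (mul_le_mul_of_nonneg_left (norm_negPart_le φ) (norm_nonneg m))
  rw [Real.norm_eq_abs, abs_le]
  unfold preJ
  constructor <;> nlinarith

/-- The positive part of `m` as a continuous linear map. -/
def mkPos : E →L[ℝ] ℝ :=
  LinearMap.mkContinuous
    { toFun := preJ m
      map_add' := preJ_add m
      map_smul' := preJ_smul m }
    (2 * ‖m‖) (preJ_bound m)

lemma mkPos_apply (φ : E) : mkPos m φ = posP m (φ⁺) - posP m (φ⁻) := rfl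

lemma mkPos_eq_preJ (φ : E) : mkPos m φ = preJ m φ := rfl

lemma mkPos_of_nonneg {φ : E} (hφ : 0 ≤ φ) : mkPos m φ = posP m φ := by
  rw [mkPos_eq_preJ, preJ_eq m hφ le_rfl (sub_zero φ).symm, posP_zero m, sub_zero]

lemma mkPos_nonneg {φ : E} (hφ : 0 ≤ φ) : 0 ≤ mkPos m φ := by
  rw [mkPos_of_nonneg m hφ]; exact posP_nonneg m hφ

lemma le_mkPos {φ : E} (hφ : 0 ≤ φ) : m φ ≤ mkPos m φ := by
  rw [mkPos_of_nonneg m hφ]; exact le_posP m hφ le_rfl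

end posP

section convFacts

lemma conv_congr {f g₁ g₂ : ℝ → ℝ} (h : g₁ =ᵐ[volume] g₂) : conv f g₁ = conv f g₂ := by
  funext x
  refine integral_congr_ae ?_
  have hmp := (Measure.measurePreserving_sub_left (volume : Measure ℝ) x).quasiMeasurePreserving
  filter_upwards [hmp.ae_eq h] with t ht
  simp only [Function.comp] at ht
  rw [ht]

lemma integrable_shift_mul {f : ℝ → ℝ} (hf : Integrable f) {g : ℝ → ℝ}
    (hg : AEStronglyMeasurable g volume) {C : ℝ} (hb : ∀ᵐ x ∂(volume : Measure ℝ), ‖g x‖ ≤ C)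
    (x : ℝ) : Integrable (fun t => g (x - t) * f t) volume := by
  have hmp := (Measure.measurePreserving_sub_left (volume : Measure ℝ) x).quasiMeasurePreserving
  have h1 : AEStronglyMeasurable (fun t => g (x - t)) volume := by
    have := hg.comp_quasiMeasurePreserving hmp
    exact this
  have h2 : ∀ᵐ t ∂(volume : Measure ℝ), ‖g (x - t)‖ ≤ C := hmp.ae hb
  exact hf.bdd_mul h1 h2

lemma conv_norm_le {f : ℝ → ℝ} (hf : Integrable f) {g : ℝ → ℝ}
    (hg : AEStronglyMeasurable g volume) {C : ℝ} (hC : 0 ≤ C)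
    (hb : ∀ᵐ x ∂(volume : Measure ℝ), ‖g x‖ ≤ C) (x : ℝ) :
    ‖conv f g x‖ ≤ C * ∫ t, ‖f t‖ := by
  have hmp := (Measure.measurePreserving_sub_left (volume : Measure ℝ) x).quasiMeasurePreserving
  have hint := integrable_shift_mul hf hg hb x
  calc ‖conv f g x‖ ≤ ∫ t, ‖g (x - t) * f t‖ := norm_integral_le_integral_norm _
  _ ≤ ∫ t, C * ‖f t‖ := by
      refine integral_mono_ae hint.norm (hf.norm.const_mul C) ?_
      filter_upwards [hmp.ae hb] with t ht
      rw [norm_mul]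
      exact mul_le_mul_of_nonneg_right ht (norm_nonneg _)
  _ = C * ∫ t, ‖f t‖ := by rw [integral_const_mul]

lemma conv_memℒp {f : ℝ → ℝ} (hf : Integrable f) (φ : E) :
    MemLp (fun x => conv f (⇑φ) x) ⊤ (volume : Measure ℝ) := by
  obtain ⟨hgm, hb⟩ : AEStronglyMeasurable (⇑φ) volume ∧ ∀ᵐ x ∂(volume : Measure ℝ), ‖φ x‖ ≤ ‖φ‖ :=
    ⟨Lp.aestronglyMeasurable φ, ae_bound φ⟩
  set g' : ℝ → ℝ := hgm.mk (⇑φ) with hg'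
  have hgg' : (⇑φ) =ᵐ[volume] g' := hgm.ae_eq_mk
  have hconv_eq : (fun x => conv f (⇑φ) x) = fun x => conv f g' x := conv_congr hgg'
  have hmeas : AEStronglyMeasurable (fun x => conv f g' x) volume := by
    have hF : AEStronglyMeasurable (fun p : ℝ × ℝ => g' (p.1 - p.2) * f p.2)
        ((volume : Measure ℝ).prod (volume : Measure ℝ)) := by
      refine AEStronglyMeasurable.mul ?_ ?_
      · exact (hgm.stronglyMeasurable_mk.comp_measurable measurable_sub).aestronglyMeasurable
      · exact hf.1.comp_quasiMeasurePreserving Measure.quasiMeasurePreserving_snd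
    have := hF.integral_prod_right'
    simpa [conv] using this
  rw [hconv_eq]
  refine memLp_top_of_bound hmeas (‖φ‖ * ∫ t, ‖f t‖) (Eventually.of_forall fun x => ?_)
  have hb' : ∀ᵐ y ∂(volume : Measure ℝ), ‖g' y‖ ≤ ‖φ‖ := by
    filter_upwards [hb, hgg'] with y h1 h2
    rw [← h2]; exact h1
  exact conv_norm_le hf (hgm.congr hgg') (norm_nonneg φ) hb' x

end convFacts

end

end JordanAux

theorem jordan_decomposition_of_conv_invariant (f : ℝ → ℝ) (hf : Integrable f)
    (hfpos : ∀ᵐ x ∂(volume : Measure ℝ), 0 ≤ f x) (hfone : ∫ x, f x = 1)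
    (m : Lp ℝ ⊤ (volume : Measure ℝ) →L[ℝ] ℝ)
    (hinv : ∀ φ ψ : Lp ℝ ⊤ (volume : Measure ℝ),
        ⇑ψ =ᵐ[volume] (fun x => conv f (⇑φ) x) → m ψ = m φ) :
    ∃ mp mm : Lp ℝ ⊤ (volume : Measure ℝ) →L[ℝ] ℝ,
      (∀ φ : Lp ℝ ⊤ (volume : Measure ℝ), (0 : ℝ → ℝ) ≤ᵐ[volume] ⇑φ → 0 ≤ mp φ) ∧
      (∀ φ : Lp ℝ ⊤ (volume : Measure ℝ), (0 : ℝ → ℝ) ≤ᵐ[volume] ⇑φ → 0 ≤ mm φ) ∧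
      (∀ φ ψ : Lp ℝ ⊤ (volume : Measure ℝ),
        ⇑ψ =ᵐ[volume] (fun x => conv f (⇑φ) x) → mp ψ = mp φ) ∧
      (∀ φ ψ : Lp ℝ ⊤ (volume : Measure ℝ),
        ⇑ψ =ᵐ[volume] (fun x => conv f (⇑φ) x) → mm ψ = mm φ) ∧
      m = mp - mm ∧ ‖m‖ = ‖mp‖ + ‖mm‖ := by
  classical
  -- the constant function 1
  have hone_mem : MemLp (fun _ : ℝ => (1 : ℝ)) ⊤ (volume : Measure ℝ) := memLp_top_const 1
  set one : Lp ℝ ⊤ (volume : Measure ℝ) := hone_mem.toLp _ with hone_def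
  have hone_coe : ⇑one =ᵐ[volume] fun _ => (1 : ℝ) := MemLp.coeFn_toLp _
  have hone_nonneg : 0 ≤ one := by
    rw [← Lp.coeFn_nonneg]
    filter_upwards [hone_coe] with x hx
    simp [hx]
  have hμne : (volume : Measure ℝ) ≠ 0 := by
    intro h0
    have hu := Real.volume_univ
    rw [h0] at hu
    simp at hu
  have hone_norm : ‖one‖ = 1 := by
    rw [hone_def, Lp.norm_toLp, eLpNorm_const (1 : ℝ) (by simp) hμne]
    simp
  -- order bound by the norm
  have hle_norm_smul : ∀ φ : Lp ℝ ⊤ (volume : Measure ℝ), φ ≤ ‖φ‖ • one := by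
    intro φ
    rw [← Lp.coeFn_le]
    filter_upwards [JordanAux.ae_bound φ, Lp.coeFn_smul ‖φ‖ one, hone_coe] with x h1 h2 h3
    rw [h2, Pi.smul_apply, h3, smul_eq_mul, mul_one]
    calc φ x ≤ |φ x| := le_abs_self _
    _ = ‖φ x‖ := (Real.norm_eq_abs _).symm
    _ ≤ ‖φ‖ := h1
  -- norm of a positive functional
  have posLin_norm : ∀ ℓ : Lp ℝ ⊤ (volume : Measure ℝ) →L[ℝ] ℝ,
      (∀ φ, 0 ≤ φ → 0 ≤ ℓ φ) → ‖ℓ‖ = ℓ one := by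
    intro ℓ hpos
    have mono : ∀ a b : Lp ℝ ⊤ (volume : Measure ℝ), a ≤ b → ℓ a ≤ ℓ b := by
      intro a b h
      have := hpos _ (sub_nonneg.2 h)
      rw [map_sub] at this; linarith
    have h1 : 0 ≤ ℓ one := hpos one hone_nonneg
    refine le_antisymm (ℓ.opNorm_le_bound h1 fun φ => ?_) ?_
    · rw [Real.norm_eq_abs, abs_le]
      constructor
      · have h2 : ℓ (-φ) ≤ ℓ (‖-φ‖ • one) := mono _ _ (hle_norm_smul (-φ))
        rw [map_neg, ℓ.map_smul, smul_eq_mul, norm_neg] at h2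
        linarith
      · have h2 : ℓ φ ≤ ℓ (‖φ‖ • one) := mono _ _ (hle_norm_smul φ)
        rw [ℓ.map_smul, smul_eq_mul] at h2
        linarith
    · calc ℓ one ≤ |ℓ one| := le_abs_self _
      _ = ‖ℓ one‖ := (Real.norm_eq_abs _).symm
      _ ≤ ‖ℓ‖ * ‖one‖ := ℓ.le_opNorm one
      _ = ‖ℓ‖ := by rw [hone_norm, mul_one]
  -- the convolution operator T
  have memT : ∀ φ : Lp ℝ ⊤ (volume : Measure ℝ),
      MemLp (fun x => conv f (⇑φ) x) ⊤ (volume : Measure ℝ) :=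
    fun φ => JordanAux.conv_memℒp hf φ
  set T : Lp ℝ ⊤ (volume : Measure ℝ) → Lp ℝ ⊤ (volume : Measure ℝ) :=
    fun φ => (memT φ).toLp _ with hT_def
  have hT_coe : ∀ φ, ⇑(T φ) =ᵐ[volume] fun x => conv f (⇑φ) x := fun φ => MemLp.coeFn_toLp _
  have hT_unique : ∀ φ ψ : Lp ℝ ⊤ (volume : Measure ℝ), ⇑ψ =ᵐ[volume] (fun x => conv f (⇑φ) x) → ψ = T φ :=
    fun φ ψ h => Lp.ext (h.trans (hT_coe φ).symm)
  have hint : ∀ (φ : Lp ℝ ⊤ (volume : Measure ℝ)) (x : ℝ),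
      Integrable (fun t => (⇑φ) (x - t) * f t) volume :=
    fun φ x => JordanAux.integrable_shift_mul hf (Lp.aestronglyMeasurable φ)
      (JordanAux.ae_bound φ) x
  have hTadd : ∀ φ η, T (φ + η) = T φ + T η := by
    intro φ η
    have hc : (fun x => conv f (⇑(φ + η)) x) = fun x => conv f (⇑φ) x + conv f (⇑η) x := by
      rw [show conv f (⇑(φ + η)) = conv f (⇑φ + ⇑η) from JordanAux.conv_congr (Lp.coeFn_add φ η)]
      funext x
      show (∫ t : ℝ, (⇑φ + ⇑η) (x - t) * f t) = _
      simp only [Pi.add_apply, add_mul]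
      exact integral_add (hint φ x) (hint η x)
    refine Lp.ext ?_
    filter_upwards [hT_coe (φ + η), Lp.coeFn_add (T φ) (T η), hT_coe φ, hT_coe η]
      with x h1 h2 h3 h4
    rw [h1, h2, congrFun hc x, Pi.add_apply, h3, h4]
  have hTsmul : ∀ (c : ℝ) φ, T (c • φ) = c • T φ := by
    intro c φ
    have hc : (fun x => conv f (⇑(c • φ)) x) = fun x => c * conv f (⇑φ) x := by
      rw [show conv f (⇑(c • φ)) = conv f (c • ⇑φ) from JordanAux.conv_congr (Lp.coeFn_smul c φ)]
      funext x
      show (∫ t : ℝ, (c • ⇑φ) (x - t) * f t) = _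
      simp only [Pi.smul_apply, smul_eq_mul, mul_assoc]
      exact integral_const_mul c _
    refine Lp.ext ?_
    filter_upwards [hT_coe (c • φ), Lp.coeFn_smul c (T φ), hT_coe φ] with x h1 h2 h3
    rw [h1, h2, congrFun hc x, Pi.smul_apply, h3, smul_eq_mul]
  have hTsub : ∀ φ η, T (φ - η) = T φ - T η := by
    intro φ η
    have e1 : φ - η = φ + (-1 : ℝ) • η := by rw [neg_one_smul, ← sub_eq_add_neg]
    rw [e1, hTadd, hTsmul, neg_one_smul, ← sub_eq_add_neg]
  have hTpos : ∀ φ, 0 ≤ φ → 0 ≤ T φ := by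
    intro φ h
    rw [← Lp.coeFn_nonneg] at h ⊢
    have h' : ∀ᵐ y ∂(volume : Measure ℝ), 0 ≤ φ y := by
      filter_upwards [h] with y hy
      simpa using hy
    filter_upwards [hT_coe φ] with x hx
    rw [Pi.zero_apply, hx]
    refine integral_nonneg_of_ae ?_
    have hmp := (Measure.measurePreserving_sub_left (volume : Measure ℝ) x).quasiMeasurePreserving
    filter_upwards [hmp.ae h', hfpos] with t h1 h2
    exact mul_nonneg h1 h2
  have hTone : T one = one := by
    symm
    apply hT_unique
    have h1 : (fun x => conv f (⇑one) x) = fun _ => (1 : ℝ) := by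
      rw [show conv f (⇑one) = conv f (fun _ => (1 : ℝ)) from JordanAux.conv_congr hone_coe]
      funext x
      show (∫ t : ℝ, (1 : ℝ) * f t) = 1
      simp only [one_mul]
      exact hfone
    rw [h1]
    exact hone_coe
  have hTmono : ∀ φ η, φ ≤ η → T φ ≤ T η := by
    intro φ η h
    have h0 := hTpos _ (sub_nonneg.2 h)
    rw [hTsub] at h0
    exact sub_nonneg.1 h0
  have hmT : ∀ φ, m (T φ) = m φ := fun φ => hinv φ (T φ) (hT_coe φ)
  -- the positive part of m
  set mp : Lp ℝ ⊤ (volume : Measure ℝ) →L[ℝ] ℝ := JordanAux.mkPos m with hmp_def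
  have hmp_pos : ∀ φ, 0 ≤ φ → 0 ≤ mp φ := fun φ h => JordanAux.mkPos_nonneg m h
  have hmpT_ge : ∀ φ, 0 ≤ φ → mp φ ≤ mp (T φ) := by
    intro φ hφ
    rw [hmp_def, JordanAux.mkPos_of_nonneg m hφ, JordanAux.mkPos_of_nonneg m (hTpos φ hφ)]
    refine JordanAux.posP_le m hφ ?_
    intro ψ h0 h1
    rw [← hmT ψ]
    exact JordanAux.le_posP m (hTpos ψ h0) (hTmono _ _ h1)
  have hmpT : ∀ φ, 0 ≤ φ → mp (T φ) = mp φ := by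
    intro φ hφ
    refine le_antisymm ?_ (hmpT_ge φ hφ)
    have h2 : 0 ≤ ‖φ‖ • one - φ := sub_nonneg.2 (hle_norm_smul φ)
    have h3 := hmpT_ge _ h2
    have h4 : T (‖φ‖ • one - φ) = ‖φ‖ • one - T φ := by
      rw [hTsub, hTsmul, hTone]
    rw [h4, map_sub, map_sub] at h3
    linarith
  have hmpT_all : ∀ φ, mp (T φ) = mp φ := by
    intro φ
    have hd : φ = φ⁺ - φ⁻ := (posPart_sub_negPart φ).symm
    calc mp (T φ) = mp (T (φ⁺ - φ⁻)) := by rw [← hd]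
    _ = mp (T (φ⁺)) - mp (T (φ⁻)) := by rw [hTsub, map_sub]
    _ = mp (φ⁺) - mp (φ⁻) := by
        rw [hmpT _ (posPart_nonneg φ), hmpT _ (negPart_nonneg φ)]
    _ = mp φ := by rw [← map_sub, posPart_sub_negPart]
  -- the negative part
  set mm : Lp ℝ ⊤ (volume : Measure ℝ) →L[ℝ] ℝ := mp - m with hmm_def
  have hm_eq : m = mp - mm := by rw [hmm_def, sub_sub_cancel]
  have hmm_pos : ∀ φ, 0 ≤ φ → 0 ≤ mm φ := by
    intro φ h
    have h1 : m φ ≤ mp φ := JordanAux.le_mkPos m h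
    rw [hmm_def, ContinuousLinearMap.sub_apply]
    linarith
  -- invariance
  have hmp_inv : ∀ φ ψ : Lp ℝ ⊤ (volume : Measure ℝ), ⇑ψ =ᵐ[volume] (fun x => conv f (⇑φ) x) → mp ψ = mp φ := by
    intro φ ψ h
    rw [hT_unique φ ψ h]
    exact hmpT_all φ
  have hmm_inv : ∀ φ ψ : Lp ℝ ⊤ (volume : Measure ℝ), ⇑ψ =ᵐ[volume] (fun x => conv f (⇑φ) x) → mm ψ = mm φ := by
    intro φ ψ h
    rw [hmm_def, ContinuousLinearMap.sub_apply, ContinuousLinearMap.sub_apply,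
      hmp_inv φ ψ h, hinv φ ψ h]
  -- norms
  have hmp_norm : ‖mp‖ = mp one := posLin_norm mp hmp_pos
  have hmm_norm : ‖mm‖ = mm one := posLin_norm mm hmm_pos
  have hnorm_le : ‖m‖ ≤ ‖mp‖ + ‖mm‖ := by
    calc ‖m‖ = ‖mp - mm‖ := by rw [← hm_eq]
    _ ≤ ‖mp‖ + ‖mm‖ := norm_sub_le _ _
  have hkey : JordanAux.posP m one ≤ (‖m‖ + m one) / 2 := by
    refine JordanAux.posP_le m hone_nonneg ?_
    intro ψ h0 h1
    rw [le_div_iff₀ (by norm_num : (0:ℝ) < 2)]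
    have e : m ((2 : ℝ) • ψ - one) = 2 * m ψ - m one := by
      rw [map_sub, m.map_smul, smul_eq_mul]
    have hup : (2 : ℝ) • ψ - one ≤ one := by
      have hs := JordanAux.smul_le_smul_E (by norm_num : (0:ℝ) ≤ 2) h1
      have h2 : (2 : ℝ) • one - one = one := by
        rw [two_smul]; abel
      calc (2 : ℝ) • ψ - one ≤ (2 : ℝ) • one - one := sub_le_sub_right hs one
      _ = one := h2
    have hlo : -one ≤ (2 : ℝ) • ψ - one := by
      have h2 : (0 : Lp ℝ ⊤ (volume : Measure ℝ)) ≤ (2 : ℝ) • ψ :=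
        JordanAux.smul_nonneg_E (by norm_num) h0
      calc -one = (0 : Lp ℝ ⊤ (volume : Measure ℝ)) - one := by rw [zero_sub]
      _ ≤ (2 : ℝ) • ψ - one := sub_le_sub_right h2 one
    have habs : |(2 : ℝ) • ψ - one| ≤ |one| := by
      rw [abs_of_nonneg hone_nonneg]
      exact abs_le'.2 ⟨hup, neg_le.2 hlo⟩
    have hb : ‖(2 : ℝ) • ψ - one‖ ≤ 1 := by
      calc ‖(2 : ℝ) • ψ - one‖ ≤ ‖one‖ := norm_le_norm_of_abs_le_abs habs
      _ = 1 := hone_norm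
    have h4 := m.le_opNorm ((2 : ℝ) • ψ - one)
    rw [Real.norm_eq_abs] at h4
    have h5 := (le_abs_self (m ((2 : ℝ) • ψ - one))).trans h4
    rw [e] at h5
    have h6 : ‖m‖ * ‖(2 : ℝ) • ψ - one‖ ≤ ‖m‖ * 1 :=
      mul_le_mul_of_nonneg_left hb (norm_nonneg m)
    linarith
  have hmp_one : mp one = JordanAux.posP m one := JordanAux.mkPos_of_nonneg m hone_nonneg
  have hmm_one : mm one = mp one - m one := by rw [hmm_def, ContinuousLinearMap.sub_apply]
  have hnorm_ge : ‖mp‖ + ‖mm‖ ≤ ‖m‖ := by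
    rw [hmp_norm, hmm_norm, hmm_one, hmp_one]
    linarith
  refine ⟨mp, mm, ?_, ?_, hmp_inv, hmm_inv, hm_eq, le_antisymm hnorm_le hnorm_ge⟩
  · exact fun φ h => hmp_pos φ ((Lp.coeFn_nonneg φ).1 h)
  · exact fun φ h => hmm_pos φ ((Lp.coeFn_nonneg φ).1 h)
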